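/- Suppose the tuple {(n0,n1,n2), B, B_I} is admissible. Then for every x ∈ X, the boundary core is recovered from the fundamental state by x_c(a) = ∫_a^b B_Q(s) (Dx)(s) ds. -/

import Mathlib

open MeasureTheory Matrix Topology Filter

noncomputable section

namespace PIEpaper

/-- The Lebesgue measure restricted to the interval `[a,b]`. -/
def μab (a b : ℝ) : Measure ℝ := volume.restrict (Set.Icc a b)

/-- A matrix-valued function on `[a,b]` is essentially bounded (belongs to `L∞`). -/
def EssBddMat {ι κ : Type*} (a b : ℝ) (M : ℝ → Matrix ι κ ℝ) : Prop :=
  Measurable (fun s i j => M s i j) ∧ ∃ C : ℝ, ∀ᵐ s ∂(μab a b), ∀ i j, |M s i j| ≤ C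

/-- A matrix-valued function on `[a,b]` is (entrywise) square integrable. -/
def SqIntMat {ι κ : Type*} (a b : ℝ) (M : ℝ → Matrix ι κ ℝ) : Prop :=
  Measurable (fun s i j => M s i j) ∧ ∀ i j, MemLp (fun s => M s i j) 2 (μab a b)

/-- A matrix-valued kernel `R : [a,b]² → ℝ^{ι×κ}` is separable if `R(s,θ) = F(s)ᵀ G(θ)`
for essentially bounded `F, G`. -/
def SepMat {ι κ : Type*} (a b : ℝ) (R : ℝ → ℝ → Matrix ι κ ℝ) : Prop :=
  ∃ (r : ℕ) (F : ℝ → Matrix (Fin r) ι ℝ) (G : ℝ → Matrix (Fin r) κ ℝ),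
    EssBddMat a b F ∧ EssBddMat a b G ∧
    ∀ s ∈ Set.Icc a b, ∀ θ ∈ Set.Icc a b, R s θ = (F s)ᵀ * G θ

variable (a b : ℝ) (n0 n1 n2 : ℕ)

/-- Index type for the PDE state blocks `(x0, x1, x2)`, and likewise for the
fundamental state `Dx = (x0, ∂ₛx1, ∂ₛ²x2)`; it has `n_x = n0+n1+n2` elements. -/
abbrev Ix := Fin n0 ⊕ (Fin n1 ⊕ Fin n2)

/-- Index type for the boundary core `x_c = (x1, x2, ∂ₛx2)`; it has `n_S = n1+2n2` elements. -/
abbrev Ic := Fin n1 ⊕ (Fin n2 ⊕ Fin n2)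

/-- Index type for the first two block rows `(n1- and n2-sized)`. -/
abbrev I12 := Fin n1 ⊕ Fin n2

/-- Index type for the full derivative vector
`x_D = (x0, x1, x2, ∂ₛx1, ∂ₛx2, ∂ₛ²x2)` (with `n_x + n_S` elements), organized into the
fundamental-state block `(x0, ∂ₛx1, ∂ₛ²x2)` (left) and the core block `(x1, x2, ∂ₛx2)` (right). -/
abbrev ID := Ix n0 n1 n2 ⊕ Ic n1 n2

/-- An element of `W^n = W_0^{n0} × W_1^{n1} × W_2^{n2}` on `[a,b]`, encoded through its
components together with their (weak) derivatives: `x1 ∈ W_1` and `x2 ∈ W_2` are identified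
with their absolutely continuous representatives, i.e. they satisfy the fundamental theorem
of calculus with square-integrable derivatives `dx1 = ∂ₛx1`, `dx2 = ∂ₛx2`, `ddx2 = ∂ₛ²x2`. -/
structure State where
  x0 : ℝ → Fin n0 → ℝ
  x1 : ℝ → Fin n1 → ℝ
  dx1 : ℝ → Fin n1 → ℝ
  x2 : ℝ → Fin n2 → ℝ
  dx2 : ℝ → Fin n2 → ℝ
  ddx2 : ℝ → Fin n2 → ℝ
  memLp_x0 : MemLp x0 2 (μab a b)
  memLp_dx1 : MemLp dx1 2 (μab a b)
  memLp_dx2 : MemLp dx2 2 (μab a b)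
  memLp_ddx2 : MemLp ddx2 2 (μab a b)
  ftc_x1 : ∀ s ∈ Set.Icc a b, ∀ i, x1 s i = x1 a i + ∫ θ in a..s, dx1 θ i
  ftc_x2 : ∀ s ∈ Set.Icc a b, ∀ i, x2 s i = x2 a i + ∫ θ in a..s, dx2 θ i
  ftc_dx2 : ∀ s ∈ Set.Icc a b, ∀ i, dx2 s i = dx2 a i + ∫ θ in a..s, ddx2 θ i

variable {a b n0 n1 n2}

/-- The PDE state `x = (x0, x1, x2)` as an `ℝ^{n_x}`-valued function. -/
def xfun (x : State a b n0 n1 n2) (s : ℝ) : Ix n0 n1 n2 → ℝ :=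
  Sum.elim (x.x0 s) (Sum.elim (x.x1 s) (x.x2 s))

/-- The fundamental state `Dx = (x0, ∂ₛx1, ∂ₛ²x2)` as an `ℝ^{n_x}`-valued function. -/
def Dx (x : State a b n0 n1 n2) (s : ℝ) : Ix n0 n1 n2 → ℝ :=
  Sum.elim (x.x0 s) (Sum.elim (x.dx1 s) (x.ddx2 s))

/-- The boundary core `x_c = (x1, x2, ∂ₛx2)` as an `ℝ^{n_S}`-valued function. -/
def xc (x : State a b n0 n1 n2) (s : ℝ) : Ic n1 n2 → ℝ :=
  Sum.elim (x.x1 s) (Sum.elim (x.x2 s) (x.dx2 s))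

/-- The full derivative vector `x_D = (x0, x1, x2, ∂ₛx1, ∂ₛx2, ∂ₛ²x2)`. -/
def xD (x : State a b n0 n1 n2) (s : ℝ) : ID n0 n1 n2 → ℝ :=
  Sum.elim (Dx x s) (xc x s)

/-- The boundary-value vector `x_b = (x_c(a), x_c(b)) ∈ ℝ^{2 n_S}`. -/
def xb (x : State a b n0 n1 n2) : (Ic n1 n2 ⊕ Ic n1 n2) → ℝ :=
  Sum.elim (xc x a) (xc x b)

variable (a b n0 n1 n2)

/-- `T(η) = [[I,0,0],[0,I,ηI],[0,0,I]] ∈ ℝ^{n_S × n_S}`. -/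
def Tmat (η : ℝ) : Matrix (Ic n1 n2) (Ic n1 n2) ℝ :=
  Matrix.of fun i j =>
    match i, j with
    | .inl i, .inl j => if i = j then (1:ℝ) else 0
    | .inr (.inl i), .inr (.inl j) => if i = j then (1:ℝ) else 0
    | .inr (.inl i), .inr (.inr j) => if i = j then η else 0
    | .inr (.inr i), .inr (.inr j) => if i = j then (1:ℝ) else 0
    | _, _ => 0

/-- `Q(η) = [[0,I_{n1},0],[0,0,ηI_{n2}],[0,0,I_{n2}]] ∈ ℝ^{n_S × n_x}`. -/
def Qmat (η : ℝ) : Matrix (Ic n1 n2) (Ix n0 n1 n2) ℝ :=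
  Matrix.of fun i j =>
    match i, j with
    | .inl i, .inr (.inl j) => if i = j then (1:ℝ) else 0
    | .inr (.inl i), .inr (.inr j) => if i = j then η else 0
    | .inr (.inr i), .inr (.inr j) => if i = j then (1:ℝ) else 0
    | _, _ => 0

/-- Embedding of the first two block rows into the `x_c` index. -/
def emb12 : I12 n1 n2 → Ic n1 n2 := Sum.elim Sum.inl (fun k => Sum.inr (Sum.inl k))

/-- `T1(η)`: the first two block rows of `T(η)`. -/
def T1mat (η : ℝ) : Matrix (I12 n1 n2) (Ic n1 n2) ℝ :=
  Matrix.of fun i j => Tmat n1 n2 η (emb12 n1 n2 i) j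

/-- `Q1(η)`: the first two block rows of `Q(η)`. -/
def Q1mat (η : ℝ) : Matrix (I12 n1 n2) (Ix n0 n1 n2) ℝ :=
  Matrix.of fun i j => Qmat n0 n1 n2 η (emb12 n1 n2 i) j

/-- `U1 ∈ ℝ^{(n_x+n_S) × n_x}`: the 0-1 matrix placing `(v0,v1,v2)` into the
`x0`, `∂ₛx1` and `∂ₛ²x2` blocks of the `x_D` ordering. -/
def U1 : Matrix (ID n0 n1 n2) (Ix n0 n1 n2) ℝ :=
  Matrix.of fun i j =>
    match i with
    | .inl i' => if i' = j then (1:ℝ) else 0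
    | .inr _ => 0

/-- `U2 ∈ ℝ^{(n_x+n_S) × n_S}`: the 0-1 matrix placing `(w1,w2,w3)` into the
`x1`, `x2` and `∂ₛx2` blocks of the `x_D` ordering. -/
def U2 : Matrix (ID n0 n1 n2) (Ic n1 n2) ℝ :=
  Matrix.of fun i j =>
    match i with
    | .inl _ => (0:ℝ)
    | .inr i' => if i' = j then 1 else 0

/-- The stacked matrix `[T(0); T(b-a)] ∈ ℝ^{2n_S × n_S}`. -/
def Tstack : Matrix (Ic n1 n2 ⊕ Ic n1 n2) (Ic n1 n2) ℝ :=
  Matrix.of fun i j =>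
    match i with
    | .inl i' => Tmat n1 n2 0 i' j
    | .inr i' => Tmat n1 n2 (b - a) i' j

/-- The stacked matrix `[0_{n_S×n_x}; Q(η)] ∈ ℝ^{2n_S × n_x}`. -/
def Qstack (η : ℝ) : Matrix (Ic n1 n2 ⊕ Ic n1 n2) (Ix n0 n1 n2) ℝ :=
  Matrix.of fun i j =>
    match i with
    | .inl _ => (0:ℝ)
    | .inr i' => Qmat n0 n1 n2 η i' j

variable (B : Matrix (Ic n1 n2) (Ic n1 n2 ⊕ Ic n1 n2) ℝ)
variable (B_I : ℝ → Matrix (Ic n1 n2) (ID n0 n1 n2) ℝ)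

/-- `B_T = B [T(0); T(b−a)] − ∫_a^b B_I(s) U2 T(s−a) ds`. -/
def BT : Matrix (Ic n1 n2) (Ic n1 n2) ℝ :=
  B * Tstack a b n1 n2 -
    Matrix.of fun i j => ∫ s in a..b, (B_I s * U2 n0 n1 n2 * Tmat n1 n2 (s - a)) i j

/-- Admissibility of the boundary conditions: `B_T` is invertible. -/
def Admissible : Prop := IsUnit (BT a b n0 n1 n2 B B_I).det

/-- `B_Q(s) = B_T⁻¹ ( B_I(s) U1 − B [0; Q(b−s)] + ∫_s^b B_I(θ) U2 Q(θ−s) dθ )`. -/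
def BQ (s : ℝ) : Matrix (Ic n1 n2) (Ix n0 n1 n2) ℝ :=
  (BT a b n0 n1 n2 B B_I)⁻¹ *
    (B_I s * U1 n0 n1 n2 - B * Qstack n0 n1 n2 (b - s) +
      Matrix.of fun i j => ∫ θ in s..b, (B_I θ * U2 n0 n1 n2 * Qmat n0 n1 n2 (θ - s)) i j)

/-- The boundary condition `B x_b = ∫_a^b B_I(s) x_D(s) ds` defining the set `X`;
  together with the regularity encoded in `State` this says `x ∈ X`. -/
def BCholds (x : State a b n0 n1 n2) : Prop :=
  ∀ i, B.mulVec (xb x) i = ∫ s in a..b, (B_I s).mulVec (xD x s) i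

/-- `G0 = diag(I_{n0}, 0_{n1+n2})`. -/
def G0 : Matrix (Ix n0 n1 n2) (Ix n0 n1 n2) ℝ :=
  Matrix.of fun i j =>
    match i, j with
    | .inl i', .inl j' => if i' = j' then (1:ℝ) else 0
    | _, _ => 0

/-- `G2(s,θ) = [0_{n0×n_x}; T1(s−a) B_Q(θ)]`. -/
def G2 (s θ : ℝ) : Matrix (Ix n0 n1 n2) (Ix n0 n1 n2) ℝ :=
  Matrix.of fun i j =>
    match i with
    | .inl _ => (0:ℝ)
    | .inr i' => (T1mat n1 n2 (s - a) * BQ a b n0 n1 n2 B B_I θ) i' j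

/-- `G1(s,θ) = [0_{n0×n_x}; Q1(s−θ)] + G2(s,θ)`. -/
def G1 (s θ : ℝ) : Matrix (Ix n0 n1 n2) (Ix n0 n1 n2) ℝ :=
  (Matrix.of fun i j =>
    match i with
    | .inl _ => (0:ℝ)
    | .inr i' => Q1mat n0 n1 n2 (s - θ) i' j) + G2 a b n0 n1 n2 B B_I s θ

/-- The PI operator `𝒯`, acting on (representatives of) functions in `L2^{n_x}`:
`(𝒯v)(s) = G0 v(s) + ∫_a^s G1(s,θ) v(θ) dθ + ∫_s^b G2(s,θ) v(θ) dθ`. -/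
def Tfun (v : ℝ → Ix n0 n1 n2 → ℝ) (s : ℝ) : Ix n0 n1 n2 → ℝ := fun i =>
  (G0 n0 n1 n2).mulVec (v s) i
  + (∫ θ in a..s, (G1 a b n0 n1 n2 B B_I s θ).mulVec (v θ) i)
  + (∫ θ in s..b, (G2 a b n0 n1 n2 B B_I s θ).mulVec (v θ) i)

/-- `R_{D,2}(s,θ) = U2 T(s−a) B_Q(θ)`. -/
def RD2 (s θ : ℝ) : Matrix (ID n0 n1 n2) (Ix n0 n1 n2) ℝ :=
  U2 n0 n1 n2 * Tmat n1 n2 (s - a) * BQ a b n0 n1 n2 B B_I θ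

/-- `R_{D,1}(s,θ) = R_{D,2}(s,θ) + U2 Q(s−θ)`. -/
def RD1 (s θ : ℝ) : Matrix (ID n0 n1 n2) (Ix n0 n1 n2) ℝ :=
  RD2 a b n0 n1 n2 B B_I s θ + U2 n0 n1 n2 * Qmat n0 n1 n2 (s - θ)

end PIEpaper

namespace PIEpaper
variable (a b : ℝ) (n0 n1 n2 : ℕ)
variable (B : Matrix (Ic n1 n2) (Ic n1 n2 ⊕ Ic n1 n2) ℝ)
variable (B_I : ℝ → Matrix (Ic n1 n2) (ID n0 n1 n2) ℝ)

/-- The `L2[a,b]` norm of an `ℝ^ι`-valued function. -/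
def L2norm {ι : Type*} [Fintype ι] (f : ℝ → ι → ℝ) : ℝ :=
  Real.sqrt (∫ s in a..b, ∑ i, (f s i) ^ 2)

/-- The `L2[a,b]` inner product of two `ℝ^ι`-valued functions. -/
def L2inner {ι : Type*} [Fintype ι] (f g : ℝ → ι → ℝ) : ℝ :=
  ∫ s in a..b, ∑ i, f s i * g s i

variable (A0 : ℝ → Matrix (Ix n0 n1 n2) (ID n0 n1 n2) ℝ)
variable (A1 A2 : ℝ → ℝ → Matrix (Ix n0 n1 n2) (ID n0 n1 n2) ℝ)

/-- `Â0(s) = A0(s) U1`. -/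
def Ahat0 (s : ℝ) : Matrix (Ix n0 n1 n2) (Ix n0 n1 n2) ℝ := A0 s * U1 n0 n1 n2

/-- `Â1(s,θ)`. -/
def Ahat1 (s θ : ℝ) : Matrix (Ix n0 n1 n2) (Ix n0 n1 n2) ℝ :=
  A0 s * RD1 a b n0 n1 n2 B B_I s θ + A1 s θ * U1 n0 n1 n2
  + (Matrix.of fun i j => ∫ β in a..θ, (A1 s β * RD2 a b n0 n1 n2 B B_I β θ) i j)
  + (Matrix.of fun i j => ∫ β in θ..s, (A1 s β * RD1 a b n0 n1 n2 B B_I β θ) i j)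
  + (Matrix.of fun i j => ∫ β in s..b, (A2 s β * RD1 a b n0 n1 n2 B B_I β θ) i j)

/-- `Â2(s,θ)`. -/
def Ahat2 (s θ : ℝ) : Matrix (Ix n0 n1 n2) (Ix n0 n1 n2) ℝ :=
  A0 s * RD2 a b n0 n1 n2 B B_I s θ + A2 s θ * U1 n0 n1 n2
  + (Matrix.of fun i j => ∫ β in a..s, (A1 s β * RD2 a b n0 n1 n2 B B_I β θ) i j)
  + (Matrix.of fun i j => ∫ β in s..θ, (A2 s β * RD2 a b n0 n1 n2 B B_I β θ) i j)
  + (Matrix.of fun i j => ∫ β in θ..b, (A2 s β * RD1 a b n0 n1 n2 B B_I β θ) i j)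

/-- The PI operator `𝒜`:
`(𝒜v)(s) = Â0(s) v(s) + ∫_a^s Â1(s,θ) v(θ) dθ + ∫_s^b Â2(s,θ) v(θ) dθ`. -/
def Afun (v : ℝ → Ix n0 n1 n2 → ℝ) (s : ℝ) : Ix n0 n1 n2 → ℝ := fun i =>
  (Ahat0 n0 n1 n2 A0 s).mulVec (v s) i
  + (∫ θ in a..s, (Ahat1 a b n0 n1 n2 B B_I A0 A1 A2 s θ).mulVec (v θ) i)
  + (∫ θ in s..b, (Ahat2 a b n0 n1 n2 B B_I A0 A1 A2 s θ).mulVec (v θ) i)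

/-- The right-hand side of the PDE dynamics:
`A0(s) x_D(s) + ∫_a^s A1(s,θ) x_D(θ) dθ + ∫_s^b A2(s,θ) x_D(θ) dθ`. -/
def PDErhs (x : State a b n0 n1 n2) (s : ℝ) : Ix n0 n1 n2 → ℝ := fun i =>
  (A0 s).mulVec (xD x s) i
  + (∫ θ in a..s, (A1 s θ).mulVec (xD x θ) i)
  + (∫ θ in s..b, (A2 s θ).mulVec (xD x θ) i)

/-- `t ↦ u(t)` is Fréchet differentiable at `t` with respect to the `L2[a,b]` norm,
with derivative `g`. -/
def HasL2DerivAt (u : ℝ → ℝ → Ix n0 n1 n2 → ℝ) (g : ℝ → Ix n0 n1 n2 → ℝ) (t : ℝ) : Prop :=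
  Tendsto (fun h : ℝ =>
      L2norm a b (fun s i => (u (t + h) s i - u t s i) / h - g s i))
    (nhdsWithin 0 {0}ᶜ) (nhds 0)

/-- `t ↦ u(t)` is Fréchet differentiable at `t` with respect to the `𝒯`-norm
`v ↦ ‖𝒯v‖_{L2}`, with derivative `g`. -/
def HasTDerivAt (u : ℝ → ℝ → Ix n0 n1 n2 → ℝ) (g : ℝ → Ix n0 n1 n2 → ℝ) (t : ℝ) : Prop :=
  Tendsto (fun h : ℝ =>
      L2norm a b (Tfun a b n0 n1 n2 B B_I
        (fun s i => (u (t + h) s i - u t s i) / h - g s i)))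
    (nhdsWithin 0 {0}ᶜ) (nhds 0)

/-- `x : [0,∞) → W^n` satisfies the PDE defined by `{(n0,n1,n2), B, B_I, A0, A1, A2}` with
initial condition `x⁰ ∈ X`: `x(t) ∈ X` for all `t ≥ 0`, `x(0) = x⁰`, and for almost every
`t ≥ 0`, `x` is Fréchet differentiable (w.r.t. the `L2` norm) at `t` with derivative `ẋ(t)`
satisfying the dynamics for almost every `s ∈ [a,b]`. -/
def SatisfiesPDE (x : ℝ → State a b n0 n1 n2) (x0 : State a b n0 n1 n2) : Prop :=
  (∀ t, 0 ≤ t → BCholds a b n0 n1 n2 B B_I (x t)) ∧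
  (∀ᵐ s ∂(μab a b), ∀ i, xfun (x 0) s i = xfun x0 s i) ∧
  (∀ᵐ t ∂(volume.restrict (Set.Ici (0:ℝ))), ∃ g : ℝ → Ix n0 n1 n2 → ℝ,
    HasL2DerivAt a b n0 n1 n2 (fun τ => xfun (x τ)) g t ∧
    ∀ᵐ s ∂(μab a b), ∀ i, g s i = PDErhs a b n0 n1 n2 A0 A1 A2 (x t) s i)

/-- `x_f : [0,∞) → L2^{n_x}` satisfies the PIE defined by `{𝒯, 𝒜}` with initial condition
`x_f⁰ ∈ L2^{n_x}`: `x_f(t) ∈ L2` for all `t ≥ 0`, `x_f(0) = x_f⁰`, and for almost every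
`t ≥ 0`, `x_f` is Fréchet differentiable w.r.t. the `𝒯`-norm at `t` with derivative
`ẋ_f(t)` satisfying `𝒯 ẋ_f(t) = 𝒜 x_f(t)` for almost every `s ∈ [a,b]`. -/
def SatisfiesPIE (xf : ℝ → ℝ → Ix n0 n1 n2 → ℝ) (xf0 : ℝ → Ix n0 n1 n2 → ℝ) : Prop :=
  (∀ t, 0 ≤ t → MemLp (xf t) 2 (μab a b)) ∧
  (∀ᵐ s ∂(μab a b), ∀ i, xf 0 s i = xf0 s i) ∧
  (∀ᵐ t ∂(volume.restrict (Set.Ici (0:ℝ))), ∃ g : ℝ → Ix n0 n1 n2 → ℝ,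
    HasTDerivAt a b n0 n1 n2 B B_I xf g t ∧
    ∀ᵐ s ∂(μab a b), ∀ i,
      Tfun a b n0 n1 n2 B B_I g s i = Afun a b n0 n1 n2 B B_I A0 A1 A2 (xf t) s i)

/-- The `X`-norm `‖x‖_X = (Σ_{i=0}^2 ‖∂ₛ^i x_i‖²_{L2})^{1/2}`. -/
def normX (x : State a b n0 n1 n2) : ℝ :=
  Real.sqrt ((L2norm a b x.x0) ^ 2 + (L2norm a b x.dx1) ^ 2 + (L2norm a b x.ddx2) ^ 2)

/-- The Sobolev-type norm `‖x‖_H = Σ_{i=0}^2 Σ_{j=0}^i ‖∂ₛ^j x_i‖_{L2}`. -/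
def normH (x : State a b n0 n1 n2) : ℝ :=
  L2norm a b x.x0 + (L2norm a b x.x1 + L2norm a b x.dx1)
    + (L2norm a b x.x2 + L2norm a b x.dx2 + L2norm a b x.ddx2)

/-- The PDE defined by `{(n0,n1,n2), B, B_I, A0, A1, A2}` is exponentially stable. -/
def ExpStablePDE : Prop :=
  ∃ M > (0:ℝ), ∃ α > (0:ℝ), ∀ x0 : State a b n0 n1 n2, BCholds a b n0 n1 n2 B B_I x0 →
    ∀ x : ℝ → State a b n0 n1 n2, SatisfiesPDE a b n0 n1 n2 B B_I A0 A1 A2 x x0 →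
      ∀ t, 0 ≤ t → normH a b n0 n1 n2 (x t) ≤ M * normH a b n0 n1 n2 x0 * Real.exp (-α * t)

/-- The PIE defined by `{𝒯, 𝒜}` is exponentially stable. -/
def ExpStablePIE : Prop :=
  ∃ M > (0:ℝ), ∃ α > (0:ℝ), ∀ xf0 : ℝ → Ix n0 n1 n2 → ℝ, MemLp xf0 2 (μab a b) →
    ∀ xf : ℝ → ℝ → Ix n0 n1 n2 → ℝ,
      SatisfiesPIE a b n0 n1 n2 B B_I A0 A1 A2 xf xf0 →
      ∀ t, 0 ≤ t → L2norm a b (xf t) ≤ M * L2norm a b xf0 * Real.exp (-α * t)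

/-- The `X`-inner product `⟨u,w⟩_X = Σ_{i=0}^2 ⟨∂ₛ^i u_i, ∂ₛ^i w_i⟩_{L2}` of two
`ℝ^{n_x}`-valued functions, where the spatial derivatives of the `W_1`- and `W_2`-blocks
are taken classically (they exist a.e. for elements of `X`). -/
def XinnerF (u w : ℝ → Ix n0 n1 n2 → ℝ) : ℝ :=
  (∫ s in a..b, ∑ i : Fin n0, u s (Sum.inl i) * w s (Sum.inl i))
  + (∫ s in a..b, ∑ i : Fin n1,
      deriv (fun t => u t (Sum.inr (Sum.inl i))) s *
      deriv (fun t => w t (Sum.inr (Sum.inl i))) s)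
  + (∫ s in a..b, ∑ i : Fin n2,
      deriv (deriv (fun t => u t (Sum.inr (Sum.inr i)))) s *
      deriv (deriv (fun t => w t (Sum.inr (Sum.inr i)))) s)

/-- The `X`-distance between two elements of `X`, induced by the `X`-norm:
`‖u − v‖_X = ‖Du − Dv‖_{L2}`. -/
def distX (u v : State a b n0 n1 n2) : ℝ :=
  Real.sqrt (∫ s in a..b, ∑ i, (Dx u s i - Dx v s i) ^ 2)

end PIEpaper

namespace PIEpaper


section AnalysisHelpers
open intervalIntegral

lemma integrable_mul_L2 {μ : Measure ℝ} {f g : ℝ → ℝ} (hf : MemLp f 2 μ) (hg : MemLp g 2 μ) :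
    Integrable (fun s => f s * g s) μ := by
  have h := (hf.integrable_sq.add hg.integrable_sq).const_mul (2⁻¹ : ℝ)
  refine h.mono' (hf.aestronglyMeasurable.mul hg.aestronglyMeasurable) ?_
  filter_upwards with s
  have h1 : |f s| * |g s| ≤ 2⁻¹ * (f s ^ 2 + g s ^ 2) := by
    nlinarith [sq_nonneg (|f s| - |g s|), sq_abs (f s), sq_abs (g s), abs_nonneg (f s),
      abs_nonneg (g s)]
  simpa [abs_mul] using h1

lemma II_of_int {a b : ℝ} (hab : a ≤ b) {f : ℝ → ℝ}
    (hf : Integrable f (volume.restrict (Set.Icc a b))) : IntervalIntegrable f volume a b := by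
  rw [intervalIntegrable_iff_integrableOn_Ioc_of_le hab]
  exact IntegrableOn.mono_set hf Set.Ioc_subset_Icc_self

lemma contOn_mul_II {a b : ℝ} (hab : a ≤ b) {F h : ℝ → ℝ} (hF : ContinuousOn F (Set.Icc a b))
    (hh : IntervalIntegrable h volume a b) :
    IntervalIntegrable (fun s => F s * h s) volume a b := by
  rw [intervalIntegrable_iff_integrableOn_Ioc_of_le hab] at hh ⊢
  obtain ⟨C, hC⟩ := isCompact_Icc.exists_bound_of_continuousOn hF
  refine hh.bdd_mul (c := C)
    ((hF.mono Set.Ioc_subset_Icc_self).aestronglyMeasurable measurableSet_Ioc) ?_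
  exact (ae_restrict_iff' measurableSet_Ioc).2
    (.of_forall fun s hs => hC s (Set.Ioc_subset_Icc_self hs))

lemma fubini_sep {a b : ℝ} (hab : a ≤ b) {f g : ℝ → ℝ}
    (hf : IntegrableOn f (Set.Ioc a b)) (hg : IntegrableOn g (Set.Ioc a b)) :
    ∫ s in a..b, f s * ∫ θ in a..s, g θ = ∫ θ in a..b, (∫ s in θ..b, f s) * g θ := by
  set μ := volume.restrict (Set.Ioc a b) with hμ
  set H : ℝ × ℝ → ℝ := {p : ℝ × ℝ | p.2 ≤ p.1}.indicator (fun p => f p.1 * g p.2) with hH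
  have hmeas : MeasurableSet {p : ℝ × ℝ | p.2 ≤ p.1} :=
    measurableSet_le measurable_snd measurable_fst
  have hHint : Integrable H (μ.prod μ) := (Integrable.mul_prod hf hg).indicator hmeas
  have key : ∫ s, (∫ θ, H (s, θ) ∂μ) ∂μ = ∫ θ, (∫ s, H (s, θ) ∂μ) ∂μ :=
    integral_integral_swap hHint
  have hL : ∫ s in a..b, f s * ∫ θ in a..s, g θ = ∫ s, (∫ θ, H (s, θ) ∂μ) ∂μ := by
    rw [intervalIntegral.integral_of_le hab]
    refine setIntegral_congr_fun measurableSet_Ioc fun s hs => ?_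
    have h1 : ∀ θ, H (s, θ) = f s * (Set.Iic s).indicator g θ := by
      intro θ
      by_cases h : θ ≤ s
      · simp [hH, Set.indicator_of_mem, h, Set.mem_setOf_eq]
      · simp [hH, Set.indicator_of_notMem, h, Set.mem_setOf_eq]
    simp only [h1]
    rw [MeasureTheory.integral_const_mul]
    have h2 : ∫ θ, (Set.Iic s).indicator g θ ∂μ = ∫ θ in a..s, g θ := by
      rw [hμ, MeasureTheory.integral_indicator measurableSet_Iic,
        Measure.restrict_restrict measurableSet_Iic, intervalIntegral.integral_of_le hs.1.le]
      congr 1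
      rw [Set.inter_comm, Set.Ioc_inter_Iic, min_eq_right hs.2]
    rw [h2]
  have hR : ∫ θ in a..b, (∫ s in θ..b, f s) * g θ = ∫ θ, (∫ s, H (s, θ) ∂μ) ∂μ := by
    rw [intervalIntegral.integral_of_le hab]
    refine setIntegral_congr_fun measurableSet_Ioc fun θ hθ => ?_
    have h1 : ∀ s, H (s, θ) = (Set.Ici θ).indicator f s * g θ := by
      intro s
      by_cases h : θ ≤ s
      · simp [hH, Set.indicator_of_mem, h, Set.mem_setOf_eq]
      · simp [hH, Set.indicator_of_notMem, h, Set.mem_setOf_eq]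
    simp only [h1]
    rw [MeasureTheory.integral_mul_const]
    have hset : Set.Ici θ ∩ Set.Ioc a b = Set.Icc θ b := by
      ext u
      simp only [Set.mem_inter_iff, Set.mem_Ici, Set.mem_Ioc, Set.mem_Icc]
      exact ⟨fun ⟨h1, _, h3⟩ => ⟨h1, h3⟩, fun ⟨h1, h2⟩ => ⟨h1, lt_of_lt_of_le hθ.1 h1, h2⟩⟩
    have h2 : ∫ s, (Set.Ici θ).indicator f s ∂μ = ∫ s in θ..b, f s := by
      rw [hμ, MeasureTheory.integral_indicator measurableSet_Ici,
        Measure.restrict_restrict measurableSet_Ici, hset, integral_Icc_eq_integral_Ioc,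
        intervalIntegral.integral_of_le hθ.2]
    rw [h2]
  rw [hL, key, ← hR]

lemma sum_mul_integral {ι : Type*} [Fintype ι] {a b : ℝ} (c : ι → ℝ) (g : ι → ℝ → ℝ)
    (h : ∀ j, IntervalIntegrable (g j) volume a b) :
    ∑ j, c j * ∫ s in a..b, g j s = ∫ s in a..b, ∑ j, c j * g j s := by
  rw [intervalIntegral.integral_finset_sum (fun j _ => (h j).const_mul (c j))]
  exact Finset.sum_congr rfl fun j _ => (intervalIntegral.integral_const_mul _ _).symm

end AnalysisHelpers

section MatrixLemmas
variable {n0 n1 n2 : ℕ}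

lemma mulVec_sumElim {m α β : Type*} [Fintype α] [Fintype β]
    (M : Matrix m (α ⊕ β) ℝ) (u : α → ℝ) (v : β → ℝ) (i : m) :
    M.mulVec (Sum.elim u v) i = (∑ j, M i (.inl j) * u j) + ∑ j, M i (.inr j) * v j := by
  simp [Matrix.mulVec, dotProduct, Fintype.sum_sum_type]

lemma Tmat_mulVec (η : ℝ) (v : Ic n1 n2 → ℝ) :
    (Tmat n1 n2 η).mulVec v = Sum.elim (fun i => v (.inl i))
      (Sum.elim (fun i => v (.inr (.inl i)) + η * v (.inr (.inr i)))
        (fun i => v (.inr (.inr i)))) := by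
  funext i
  rcases i with i | i | i <;>
    simp [Matrix.mulVec, dotProduct, Fintype.sum_sum_type, Tmat, ite_mul,
      Finset.sum_ite_eq, Finset.sum_ite_eq']

lemma Qmat_mulVec (η : ℝ) (w : Ix n0 n1 n2 → ℝ) :
    (Qmat n0 n1 n2 η).mulVec w = Sum.elim (fun i => w (.inr (.inl i)))
      (Sum.elim (fun i => η * w (.inr (.inr i))) (fun i => w (.inr (.inr i)))) := by
  funext i
  rcases i with i | i | i <;>
    simp [Matrix.mulVec, dotProduct, Fintype.sum_sum_type, Qmat, ite_mul,
      Finset.sum_ite_eq, Finset.sum_ite_eq']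

lemma Tmat_zero_mulVec (v : Ic n1 n2 → ℝ) : (Tmat n1 n2 0).mulVec v = v := by
  rw [Tmat_mulVec]
  funext i
  rcases i with i | i | i <;> simp

lemma Tmat_apply_affine (k j : Ic n1 n2) (η : ℝ) :
    Tmat n1 n2 η k j = Tmat n1 n2 0 k j + η * (Tmat n1 n2 1 k j - Tmat n1 n2 0 k j) := by
  rcases k with k | k | k <;> rcases j with j | j | j <;> simp [Tmat]

lemma Qmat_apply_affine (k : Ic n1 n2) (j : Ix n0 n1 n2) (η : ℝ) :
    Qmat n0 n1 n2 η k j = Qmat n0 n1 n2 0 k j + η * (Qmat n0 n1 n2 1 k j - Qmat n0 n1 n2 0 k j) := by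
  rcases k with k | k | k <;> rcases j with j | j | j <;> simp [Qmat]

lemma mul_U1_apply (M : Matrix (Ic n1 n2) (ID n0 n1 n2) ℝ) (i : Ic n1 n2) (k : Ix n0 n1 n2) :
    (M * U1 n0 n1 n2) i k = M i (.inl k) := by
  simp [Matrix.mul_apply, U1, Fintype.sum_sum_type, mul_ite, Finset.sum_ite_eq,
    Finset.sum_ite_eq']

lemma mul_U2_apply (M : Matrix (Ic n1 n2) (ID n0 n1 n2) ℝ) (i : Ic n1 n2) (j : Ic n1 n2) :
    (M * U2 n0 n1 n2) i j = M i (.inr j) := by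
  simp [Matrix.mul_apply, U2, Fintype.sum_sum_type, mul_ite, Finset.sum_ite_eq,
    Finset.sum_ite_eq']

lemma mulU1_mulVec (M : Matrix (Ic n1 n2) (ID n0 n1 n2) ℝ) (v : Ix n0 n1 n2 → ℝ) (i : Ic n1 n2) :
    (M * U1 n0 n1 n2).mulVec v i = ∑ k, M i (.inl k) * v k := by
  simp [Matrix.mulVec, dotProduct, mul_U1_apply]

lemma mulU2_mulVec (M : Matrix (Ic n1 n2) (ID n0 n1 n2) ℝ) (w : Ic n1 n2 → ℝ) (i : Ic n1 n2) :
    (M * U2 n0 n1 n2).mulVec w i = ∑ j, M i (.inr j) * w j := by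
  simp [Matrix.mulVec, dotProduct, mul_U2_apply]

lemma Tstack_mulVec {a b : ℝ} (v : Ic n1 n2 → ℝ) :
    (Tstack a b n1 n2).mulVec v =
      Sum.elim ((Tmat n1 n2 0).mulVec v) ((Tmat n1 n2 (b - a)).mulVec v) := by
  funext i
  rcases i with i | i <;> rfl

lemma Qstack_mulVec (η : ℝ) (w : Ix n0 n1 n2 → ℝ) :
    (Qstack n0 n1 n2 η).mulVec w =
      Sum.elim (fun _ => 0) ((Qmat n0 n1 n2 η).mulVec w) := by
  funext i
  rcases i with i | i
  · simp [Qstack, Matrix.mulVec, dotProduct]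
  · rfl

lemma BIU2Q_apply (M : Matrix (Ic n1 n2) (ID n0 n1 n2) ℝ) (η : ℝ) (i : Ic n1 n2) :
    (∀ j0 : Fin n0, (M * U2 n0 n1 n2 * Qmat n0 n1 n2 η) i (.inl j0) = 0) ∧
    (∀ j1 : Fin n1, (M * U2 n0 n1 n2 * Qmat n0 n1 n2 η) i (.inr (.inl j1)) =
      M i (.inr (.inl j1))) ∧
    (∀ j2 : Fin n2, (M * U2 n0 n1 n2 * Qmat n0 n1 n2 η) i (.inr (.inr j2)) =
      η * M i (.inr (.inr (.inl j2))) + M i (.inr (.inr (.inr j2)))) := by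
  refine ⟨fun j0 => ?_, fun j1 => ?_, fun j2 => ?_⟩ <;>
  · rw [Matrix.mul_apply]
    simp only [mul_U2_apply]
    simp [Qmat, Fintype.sum_sum_type, mul_ite, Finset.sum_ite_eq, Finset.sum_ite_eq', mul_comm]

end MatrixLemmas


section StateLemmas
set_option maxHeartbeats 1000000
open intervalIntegral
variable {a b : ℝ} {n0 n1 n2 : ℕ}

instance isFiniteMeasure_μab (a b : ℝ) : IsFiniteMeasure (μab a b) :=
  ⟨by rw [μab, Measure.restrict_apply_univ]; exact measure_Icc_lt_top⟩

lemma memLp_integrable {f : ℝ → ℝ} (hf : MemLp f 2 (μab a b)) : Integrable f (μab a b) :=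
  hf.integrable one_le_two

lemma comp_eval {n : ℕ} {f : ℝ → Fin n → ℝ} (hf : MemLp f 2 (μab a b)) (k : Fin n) :
    MemLp (fun s => f s k) 2 (μab a b) :=
  hf.of_le ((continuous_apply k).comp_aestronglyMeasurable hf.aestronglyMeasurable)
    (Filter.Eventually.of_forall fun s => norm_le_pi_norm (f s) k)

lemma Dx_memLp (x : State a b n0 n1 n2) (k : Ix n0 n1 n2) :
    MemLp (fun s => Dx x s k) 2 (μab a b) := by
  rcases k with k | k | k
  · simpa only [Dx, Sum.elim_inl] using comp_eval x.memLp_x0 k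
  · simpa only [Dx, Sum.elim_inr, Sum.elim_inl] using comp_eval x.memLp_dx1 k
  · simpa only [Dx, Sum.elim_inr] using comp_eval x.memLp_ddx2 k

lemma Dx_II (hab : a ≤ b) (x : State a b n0 n1 n2) (k : Ix n0 n1 n2) :
    IntervalIntegrable (fun s => Dx x s k) volume a b :=
  II_of_int hab (memLp_integrable (Dx_memLp x k))

lemma constMulVec_II (hab : a ≤ b) (x : State a b n0 n1 n2)
    (M : Matrix (Ic n1 n2) (Ix n0 n1 n2) ℝ) (j : Ic n1 n2) :
    IntervalIntegrable (fun θ => M.mulVec (Dx x θ) j) volume a b := by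
  have h : (fun θ => M.mulVec (Dx x θ) j) = fun θ => ∑ k, M j k * Dx x θ k := rfl
  rw [h]
  have hs := IntervalIntegrable.sum (μ := volume) (a := a) (b := b) Finset.univ
    (f := fun k θ => M j k * Dx x θ k) (fun k _ => (Dx_II hab x k).const_mul _)
  have h2 : (∑ k : Ix n0 n1 n2, fun θ => M j k * Dx x θ k)
      = fun θ => ∑ k, M j k * Dx x θ k := by
    funext θ; simp
  rwa [h2] at hs

lemma Qmat_mulVec_affine (x : State a b n0 n1 n2) (r θ : ℝ) (j : Ic n1 n2) :
    (Qmat n0 n1 n2 (r - θ)).mulVec (Dx x θ) j =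
      (Qmat n0 n1 n2 0).mulVec (Dx x θ) j +
        (r - θ) * (Qmat n0 n1 n2 1 - Qmat n0 n1 n2 0).mulVec (Dx x θ) j := by
  simp only [Matrix.mulVec, dotProduct, Finset.mul_sum, ← Finset.sum_add_distrib]
  refine Finset.sum_congr rfl fun k _ => ?_
  rw [Qmat_apply_affine]
  simp only [Matrix.sub_apply]
  ring

lemma Qcomb_II (hab : a ≤ b) (x : State a b n0 n1 n2) (r : ℝ) (j : Ic n1 n2) :
    IntervalIntegrable (fun θ => (Qmat n0 n1 n2 (r - θ)).mulVec (Dx x θ) j) volume a b := by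
  have h : (fun θ => (Qmat n0 n1 n2 (r - θ)).mulVec (Dx x θ) j)
      = fun θ => (Qmat n0 n1 n2 0).mulVec (Dx x θ) j +
          (r - θ) * (Qmat n0 n1 n2 1 - Qmat n0 n1 n2 0).mulVec (Dx x θ) j := by
    funext θ; exact Qmat_mulVec_affine x r θ j
  rw [h]
  exact (constMulVec_II hab x _ j).add
    (contOn_mul_II hab ((continuous_const.sub continuous_id).continuousOn)
      (constMulVec_II hab x _ j))

lemma ddx2_mem (x : State a b n0 n1 n2) (i : Fin n2) :
    MemLp (fun s => x.ddx2 s i) 2 (μab a b) :=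
  comp_eval x.memLp_ddx2 i

lemma xc_formula (hab : a ≤ b) (x : State a b n0 n1 n2) :
    ∀ s ∈ Set.Icc a b, ∀ i, xc x s i =
      (Tmat n1 n2 (s - a)).mulVec (xc x a) i
        + ∫ θ in a..s, (Qmat n0 n1 n2 (s - θ)).mulVec (Dx x θ) i := by
  intro s hs i
  have hasb : a ≤ s := hs.1
  rcases i with i | i | i
  · rw [Tmat_mulVec]
    have hcong : (fun θ => (Qmat n0 n1 n2 (s - θ)).mulVec (Dx x θ) (Sum.inl i))
        = fun θ => x.dx1 θ i := by
      funext θ; rw [Qmat_mulVec]; rfl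
    rw [hcong]
    simpa [xc] using x.ftc_x1 s hs i
  · rw [Tmat_mulVec]
    have hcong : (fun θ => (Qmat n0 n1 n2 (s - θ)).mulVec (Dx x θ) (Sum.inr (Sum.inl i)))
        = fun θ => (s - θ) * x.ddx2 θ i := by
      funext θ; rw [Qmat_mulVec]; rfl
    rw [hcong]
    simp only [xc, Sum.elim_inr, Sum.elim_inl]
    have hddInt : IntegrableOn (fun β => x.ddx2 β i) (Set.Icc a b) volume :=
      memLp_integrable (ddx2_mem x i)
    have hdds : IntegrableOn (fun β => x.ddx2 β i) (Set.Ioc a s) volume :=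
      hddInt.mono_set (Set.Ioc_subset_Icc_self.trans (Set.Icc_subset_Icc_right hs.2))
    have h1 := x.ftc_x2 s hs i
    have h2 : ∫ θ in a..s, x.dx2 θ i
        = (s - a) * x.dx2 a i + ∫ θ in a..s, ∫ β in a..θ, x.ddx2 β i := by
      have hEq : Set.EqOn (fun θ => x.dx2 θ i)
          (fun θ => x.dx2 a i + ∫ β in a..θ, x.ddx2 β i) (Set.uIcc a s) := by
        intro θ hθ
        rw [Set.uIcc_of_le hasb] at hθ
        exact x.ftc_dx2 θ ⟨hθ.1, hθ.2.trans hs.2⟩ i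
      rw [_root_.intervalIntegral.integral_congr hEq]
      have hprim : IntervalIntegrable (fun θ => ∫ β in a..θ, x.ddx2 β i) volume a s := by
        refine ContinuousOn.intervalIntegrable ?_
        refine continuousOn_primitive_interval ?_
        rw [Set.uIcc_of_le hasb]
        exact hddInt.mono_set (Set.Icc_subset_Icc_right hs.2)
      rw [intervalIntegral.integral_add intervalIntegrable_const hprim,
        intervalIntegral.integral_const, smul_eq_mul]
    have h3 : ∫ θ in a..s, ∫ β in a..θ, x.ddx2 β i
        = ∫ θ in a..s, (s - θ) * x.ddx2 θ i := by
      have h1c : IntegrableOn (fun _ : ℝ => (1:ℝ)) (Set.Ioc a s) volume :=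
        integrableOn_const measure_Ioc_lt_top.ne
      have := fubini_sep hasb h1c hdds
      simpa [intervalIntegral.integral_const, smul_eq_mul] using this
    rw [h1, h2, h3]
    ring
  · rw [Tmat_mulVec]
    have hcong : (fun θ => (Qmat n0 n1 n2 (s - θ)).mulVec (Dx x θ) (Sum.inr (Sum.inr i)))
        = fun θ => x.ddx2 θ i := by
      funext θ; rw [Qmat_mulVec]; rfl
    rw [hcong]
    simpa [xc] using x.ftc_dx2 s hs i

end StateLemmas


section MoreMatrixLemmas
variable {n0 n1 n2 : ℕ}

lemma of_mulVec_apply {m κ : Type*} [Fintype κ] (f : m → κ → ℝ) (v : κ → ℝ) (i : m) :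
    (Matrix.of f).mulVec v i = ∑ j, f i j * v j := rfl

lemma Tmat_mulVec_affine (v : Ic n1 n2 → ℝ) (η : ℝ) (j : Ic n1 n2) :
    (Tmat n1 n2 η).mulVec v j = (Tmat n1 n2 0).mulVec v j +
      η * (Tmat n1 n2 1 - Tmat n1 n2 0).mulVec v j := by
  simp only [Matrix.mulVec, dotProduct, Finset.mul_sum, ← Finset.sum_add_distrib]
  refine Finset.sum_congr rfl fun k _ => ?_
  rw [Tmat_apply_affine]
  simp only [Matrix.sub_apply]
  ring

lemma mulU2_mul_apply {κ : Type*} (M : Matrix (Ic n1 n2) (ID n0 n1 n2) ℝ)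
    (N : Matrix (Ic n1 n2) κ ℝ) (i : Ic n1 n2) (j : κ) :
    (M * U2 n0 n1 n2 * N) i j = ∑ k, M i (.inr k) * N k j := by
  rw [Matrix.mul_apply]
  simp only [mul_U2_apply]

lemma mulU2_mul_mulVec {κ : Type*} [Fintype κ] (M : Matrix (Ic n1 n2) (ID n0 n1 n2) ℝ)
    (N : Matrix (Ic n1 n2) κ ℝ) (v : κ → ℝ) (i : Ic n1 n2) :
    (M * U2 n0 n1 n2 * N).mulVec v i = ∑ j, M i (.inr j) * N.mulVec v j := by
  rw [← Matrix.mulVec_mulVec, mulU2_mulVec]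

lemma BQstack_mulVec (B : Matrix (Ic n1 n2) (Ic n1 n2 ⊕ Ic n1 n2) ℝ)
    (η : ℝ) (v : Ix n0 n1 n2 → ℝ) (i : Ic n1 n2) :
    (B * Qstack n0 n1 n2 η).mulVec v i
      = ∑ j : Ic n1 n2, B i (Sum.inr j) * (Qmat n0 n1 n2 η).mulVec v j := by
  rw [← Matrix.mulVec_mulVec, Qstack_mulVec, mulVec_sumElim]
  simp

lemma BTstack_mulVec {a b : ℝ} (B : Matrix (Ic n1 n2) (Ic n1 n2 ⊕ Ic n1 n2) ℝ)
    (v : Ic n1 n2 → ℝ) (i : Ic n1 n2) :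
    (B * Tstack a b n1 n2).mulVec v i
      = (∑ j, B i (Sum.inl j) * v j)
        + ∑ j, B i (Sum.inr j) * (Tmat n1 n2 (b - a)).mulVec v j := by
  rw [← Matrix.mulVec_mulVec, Tstack_mulVec, Tmat_zero_mulVec, mulVec_sumElim]

end MoreMatrixLemmas

section IISum

lemma II_sum {ι : Type*} [Fintype ι] {a b : ℝ} (f : ι → ℝ → ℝ)
    (h : ∀ j, IntervalIntegrable (f j) volume a b) :
    IntervalIntegrable (fun s => ∑ j, f j s) volume a b := by
  have hs := IntervalIntegrable.sum (μ := volume) (a := a) (b := b) Finset.univ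
    (f := f) (fun k _ => h k)
  have h2 : (∑ k : ι, f k) = fun θ => ∑ k, f k θ := by funext θ; simp
  rwa [h2] at hs

end IISum


section Master
set_option maxHeartbeats 2000000 in
lemma master (a b : ℝ) (hab : a < b) (n0 n1 n2 : ℕ)
    (B : Matrix (Ic n1 n2) (Ic n1 n2 ⊕ Ic n1 n2) ℝ)
    (B_I : ℝ → Matrix (Ic n1 n2) (ID n0 n1 n2) ℝ)
    (hBI : SqIntMat a b B_I)
    (x : State a b n0 n1 n2) (hx : BCholds a b n0 n1 n2 B B_I x) (i : Ic n1 n2) :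
    IntervalIntegrable (fun s => (B_I s * U1 n0 n1 n2 - B * Qstack n0 n1 n2 (b - s) +
        Matrix.of fun i' j => ∫ θ in s..b,
          (B_I θ * U2 n0 n1 n2 * Qmat n0 n1 n2 (θ - s)) i' j).mulVec (Dx x s) i)
      volume a b ∧
    (BT a b n0 n1 n2 B B_I).mulVec (xc x a) i =
      ∫ s in a..b, (B_I s * U1 n0 n1 n2 - B * Qstack n0 n1 n2 (b - s) +
        Matrix.of fun i' j => ∫ θ in s..b,
          (B_I θ * U2 n0 n1 n2 * Qmat n0 n1 n2 (θ - s)) i' j).mulVec (Dx x s) i := by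
  have hab' : a ≤ b := hab.le
  have huIcc : Set.uIcc a b = Set.Icc a b := Set.uIcc_of_le hab'
  have hBIint : ∀ (i' : Ic n1 n2) d, IntervalIntegrable (fun s => B_I s i' d) volume a b :=
    fun i' d => II_of_int hab' (memLp_integrable (hBI.2 i' d))
  have hDII : ∀ k, IntervalIntegrable (fun s => Dx x s k) volume a b := Dx_II hab' x
  have hDon : ∀ k, IntegrableOn (fun s => Dx x s k) (Set.Ioc a b) volume :=
    fun k => IntegrableOn.mono_set (memLp_integrable (Dx_memLp x k)) Set.Ioc_subset_Icc_self
  have hBon : ∀ (i' : Ic n1 n2) d, IntegrableOn (fun s => B_I s i' d) (Set.Ioc a b) volume :=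
    fun i' d => IntegrableOn.mono_set (memLp_integrable (hBI.2 i' d)) Set.Ioc_subset_Icc_self
  have hmono : ∀ {f : ℝ → ℝ} {s : ℝ}, IntervalIntegrable f volume a b → s ∈ Set.Icc a b →
      IntervalIntegrable f volume a s := fun {f s} hf hs =>
    hf.mono_set (Set.uIcc_subset_uIcc Set.left_mem_uIcc (by rw [huIcc]; exact hs))
  have hmono' : ∀ {f : ℝ → ℝ} {s : ℝ}, IntervalIntegrable f volume a b → s ∈ Set.Icc a b →
      IntervalIntegrable f volume s b := fun {f s} hf hs =>
    hf.mono_set (Set.uIcc_subset_uIcc (by rw [huIcc]; exact hs) Set.right_mem_uIcc)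
  have hIccOn : ∀ {f : ℝ → ℝ}, IntervalIntegrable f volume a b →
      IntegrableOn f (Set.uIcc a b) volume := fun {f} hf => by
    rw [huIcc]
    exact (integrableOn_Icc_iff_integrableOn_Ioc enorm_ne_top).2
      ((intervalIntegrable_iff_integrableOn_Ioc_of_le hab').1 hf)
  have hprimL : ∀ {f : ℝ → ℝ}, IntervalIntegrable f volume a b →
      ContinuousOn (fun θ => ∫ η in θ..b, f η) (Set.Icc a b) := fun {f} hf => by
    rw [← huIcc]
    exact intervalIntegral.continuousOn_primitive_interval_left (hIccOn hf)
  have hprimR : ∀ {f : ℝ → ℝ}, IntervalIntegrable f volume a b →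
      ContinuousOn (fun s => ∫ θ in a..s, f θ) (Set.Icc a b) := fun {f} hf => by
    rw [← huIcc]
    exact intervalIntegral.continuousOn_primitive_interval (hIccOn hf)
  -- t1
  have ht1II : IntervalIntegrable
      (fun s => (B_I s * U1 n0 n1 n2).mulVec (Dx x s) i) volume a b := by
    have h : (fun s => (B_I s * U1 n0 n1 n2).mulVec (Dx x s) i)
        = fun s => ∑ k, B_I s i (Sum.inl k) * Dx x s k := by
      funext s; rw [mulU1_mulVec]
    rw [h]
    exact II_sum _ fun k =>
      II_of_int hab' (integrable_mul_L2 (hBI.2 i (Sum.inl k)) (Dx_memLp x k))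
  -- q
  have hqII : IntervalIntegrable
      (fun s => (B * Qstack n0 n1 n2 (b - s)).mulVec (Dx x s) i) volume a b := by
    have h : (fun s => (B * Qstack n0 n1 n2 (b - s)).mulVec (Dx x s) i)
        = fun s => ∑ j : Ic n1 n2,
            B i (Sum.inr j) * (Qmat n0 n1 n2 (b - s)).mulVec (Dx x s) j := by
      funext s; rw [BQstack_mulVec]
    rw [h]
    exact II_sum _ fun j => (Qcomb_II hab' x b j).const_mul _
  -- t2
  have hTcont : ∀ (k : Ic n1 n2) (j : Ic n1 n2),
      ContinuousOn (fun s : ℝ => Tmat n1 n2 (s - a) k j) (Set.uIcc a b) := by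
    intro k j
    have h2 : (fun s : ℝ => Tmat n1 n2 (s - a) k j)
        = fun s => Tmat n1 n2 0 k j + (s - a) * (Tmat n1 n2 1 k j - Tmat n1 n2 0 k j) :=
      funext fun s => Tmat_apply_affine k j (s - a)
    rw [h2]
    exact (continuous_const.add ((continuous_id.sub continuous_const).mul
      continuous_const)).continuousOn
  have hTaff : ∀ j : Ic n1 n2,
      ContinuousOn (fun s => (Tmat n1 n2 (s - a)).mulVec (xc x a) j) (Set.uIcc a b) := by
    intro j
    have h : (fun s : ℝ => (Tmat n1 n2 (s - a)).mulVec (xc x a) j)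
        = fun s => (Tmat n1 n2 0).mulVec (xc x a) j +
            (s - a) * (Tmat n1 n2 1 - Tmat n1 n2 0).mulVec (xc x a) j :=
      funext fun s => Tmat_mulVec_affine (xc x a) (s - a) j
    rw [h]
    exact (continuous_const.add ((continuous_id.sub continuous_const).mul
      continuous_const)).continuousOn
  have ht2II : IntervalIntegrable
      (fun s => (B_I s * U2 n0 n1 n2 * Tmat n1 n2 (s - a)).mulVec (xc x a) i) volume a b := by
    have h : (fun s => (B_I s * U2 n0 n1 n2 * Tmat n1 n2 (s - a)).mulVec (xc x a) i)
        = fun s => ∑ j, B_I s i (Sum.inr j) * (Tmat n1 n2 (s - a)).mulVec (xc x a) j := by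
      funext s; rw [mulU2_mul_mulVec]
    rw [h]
    exact II_sum _ fun j => (hBIint i (Sum.inr j)).mul_continuousOn (hTaff j)
  -- continuity of the inner Q-integral as a function of s
  have hGcont : ∀ j : Ic n1 n2, ContinuousOn
      (fun s => ∫ θ in a..s, (Qmat n0 n1 n2 (s - θ)).mulVec (Dx x θ) j) (Set.uIcc a b) := by
    intro j
    rw [huIcc]
    have hC0 := constMulVec_II hab' x (Qmat n0 n1 n2 0) j
    have hC1 := constMulVec_II hab' x (Qmat n0 n1 n2 1 - Qmat n0 n1 n2 0) j
    have hCθ : IntervalIntegrable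
        (fun θ => θ * (Qmat n0 n1 n2 1 - Qmat n0 n1 n2 0).mulVec (Dx x θ) j) volume a b :=
      contOn_mul_II hab' continuous_id.continuousOn hC1
    refine ContinuousOn.congr
      ((hprimR hC0).add ((continuousOn_id.mul (hprimR hC1)).sub (hprimR hCθ))) ?_
    intro s hs
    have h1 : ∀ θ : ℝ, (Qmat n0 n1 n2 (s - θ)).mulVec (Dx x θ) j
        = (Qmat n0 n1 n2 0).mulVec (Dx x θ) j +
          (s * (Qmat n0 n1 n2 1 - Qmat n0 n1 n2 0).mulVec (Dx x θ) j
            - θ * (Qmat n0 n1 n2 1 - Qmat n0 n1 n2 0).mulVec (Dx x θ) j) := by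
      intro θ; rw [Qmat_mulVec_affine x s θ j]; ring
    simp only [h1]
    rw [intervalIntegral.integral_add (hmono hC0 hs)
        (((hmono hC1 hs).const_mul s).sub (hmono hCθ hs)),
      intervalIntegral.integral_sub ((hmono hC1 hs).const_mul s) (hmono hCθ hs),
      intervalIntegral.integral_const_mul]
    rfl
  have hΦterm : ∀ j : Ic n1 n2, IntervalIntegrable
      (fun s => B_I s i (Sum.inr j) *
        ∫ θ in a..s, (Qmat n0 n1 n2 (s - θ)).mulVec (Dx x θ) j) volume a b :=
    fun j => (hBIint i (Sum.inr j)).mul_continuousOn (hGcont j)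
  have hΦII : IntervalIntegrable (fun s => ∑ j : Ic n1 n2,
      B_I s i (Sum.inr j) * ∫ θ in a..s, (Qmat n0 n1 n2 (s - θ)).mulVec (Dx x θ) j)
      volume a b := II_sum _ hΦterm
  -- expand the boundary condition, left-hand side
  have hLHS : B.mulVec (xb x) i = (B * Tstack a b n1 n2).mulVec (xc x a) i
      + ∫ s in a..b, (B * Qstack n0 n1 n2 (b - s)).mulVec (Dx x s) i := by
    have hxb : xb x = Sum.elim (xc x a) (xc x b) := rfl
    rw [hxb, mulVec_sumElim, BTstack_mulVec]
    have hb' : ∀ j, xc x b j = (Tmat n1 n2 (b - a)).mulVec (xc x a) j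
        + ∫ θ in a..b, (Qmat n0 n1 n2 (b - θ)).mulVec (Dx x θ) j :=
      fun j => xc_formula hab' x b ⟨hab', le_rfl⟩ j
    simp only [hb', mul_add, Finset.sum_add_distrib]
    have h2 : ∑ j : Ic n1 n2, B i (Sum.inr j) *
          ∫ θ in a..b, (Qmat n0 n1 n2 (b - θ)).mulVec (Dx x θ) j
        = ∫ s in a..b, (B * Qstack n0 n1 n2 (b - s)).mulVec (Dx x s) i := by
      rw [sum_mul_integral _ _ (fun j => Qcomb_II hab' x b j)]
      refine intervalIntegral.integral_congr fun s _ => ?_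
      exact (BQstack_mulVec B (b - s) (Dx x s) i).symm
    rw [h2]
    ring
  -- expand the boundary condition, right-hand side
  have hRHS : ∫ s in a..b, (B_I s).mulVec (xD x s) i
      = (∫ s in a..b, (B_I s * U1 n0 n1 n2).mulVec (Dx x s) i)
        + (∫ s in a..b, (B_I s * U2 n0 n1 n2 * Tmat n1 n2 (s - a)).mulVec (xc x a) i)
        + ∫ s in a..b, ∑ j : Ic n1 n2,
            B_I s i (Sum.inr j) * ∫ θ in a..s, (Qmat n0 n1 n2 (s - θ)).mulVec (Dx x θ) j := by
    rw [← intervalIntegral.integral_add ht1II ht2II,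
      ← intervalIntegral.integral_add (ht1II.add ht2II) hΦII]
    refine intervalIntegral.integral_congr fun s hs => ?_
    rw [huIcc] at hs
    have hxD : xD x s = Sum.elim (Dx x s) (xc x s) := rfl
    rw [hxD, mulVec_sumElim]
    have h2 : ∀ j, xc x s j = (Tmat n1 n2 (s - a)).mulVec (xc x a) j
        + ∫ θ in a..s, (Qmat n0 n1 n2 (s - θ)).mulVec (Dx x θ) j :=
      fun j => xc_formula hab' x s hs j
    simp only [h2, mul_add, Finset.sum_add_distrib]
    rw [mulU1_mulVec, mulU2_mul_mulVec]
    ring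
  -- BT acting on the boundary core
  have hEint : ∀ j : Ic n1 n2, IntervalIntegrable
      (fun s => (B_I s * U2 n0 n1 n2 * Tmat n1 n2 (s - a)) i j) volume a b := by
    intro j
    have h : (fun s => (B_I s * U2 n0 n1 n2 * Tmat n1 n2 (s - a)) i j)
        = fun s => ∑ k, B_I s i (Sum.inr k) * Tmat n1 n2 (s - a) k j := by
      funext s; rw [mulU2_mul_apply]
    rw [h]
    exact II_sum _ fun k => (hBIint i (Sum.inr k)).mul_continuousOn (hTcont k j)
  have hBTv : (BT a b n0 n1 n2 B B_I).mulVec (xc x a) i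
      = (B * Tstack a b n1 n2).mulVec (xc x a) i
        - ∫ s in a..b, (B_I s * U2 n0 n1 n2 * Tmat n1 n2 (s - a)).mulVec (xc x a) i := by
    unfold BT
    rw [Matrix.sub_mulVec, Pi.sub_apply]
    congr 1
    rw [of_mulVec_apply]
    calc ∑ j, (∫ s in a..b, (B_I s * U2 n0 n1 n2 * Tmat n1 n2 (s - a)) i j) * xc x a j
        = ∑ j, xc x a j * ∫ s in a..b, (B_I s * U2 n0 n1 n2 * Tmat n1 n2 (s - a)) i j := by
          simp [mul_comm]
      _ = ∫ s in a..b, ∑ j, xc x a j * (B_I s * U2 n0 n1 n2 * Tmat n1 n2 (s - a)) i j :=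
          sum_mul_integral _ _ hEint
      _ = ∫ s in a..b, (B_I s * U2 n0 n1 n2 * Tmat n1 n2 (s - a)).mulVec (xc x a) i := by
          refine intervalIntegral.integral_congr fun s _ => ?_
          simp [Matrix.mulVec, dotProduct, mul_comm]
  -- the three swapped terms
  have hS1 : ∀ j1 : Fin n1,
      (∫ s in a..b, B_I s i (Sum.inr (Sum.inl j1)) *
          ∫ θ in a..s, (Qmat n0 n1 n2 (s - θ)).mulVec (Dx x θ) (Sum.inl j1))
        = ∫ θ in a..b, (∫ η in θ..b, B_I η i (Sum.inr (Sum.inl j1)))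
            * Dx x θ (Sum.inr (Sum.inl j1)) := by
    intro j1
    have e : (fun s => B_I s i (Sum.inr (Sum.inl j1)) *
        ∫ θ in a..s, (Qmat n0 n1 n2 (s - θ)).mulVec (Dx x θ) (Sum.inl j1))
        = fun s => B_I s i (Sum.inr (Sum.inl j1)) *
            ∫ θ in a..s, Dx x θ (Sum.inr (Sum.inl j1)) := by
      funext s
      congr 1
      refine intervalIntegral.integral_congr fun θ _ => ?_
      rw [Qmat_mulVec]
      simp only [Sum.elim_inl, Sum.elim_inr]
    rw [e]
    exact fubini_sep hab' (hBon i (Sum.inr (Sum.inl j1))) (hDon (Sum.inr (Sum.inl j1)))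
  have hS3 : ∀ j2 : Fin n2,
      (∫ s in a..b, B_I s i (Sum.inr (Sum.inr (Sum.inr j2))) *
          ∫ θ in a..s, (Qmat n0 n1 n2 (s - θ)).mulVec (Dx x θ) (Sum.inr (Sum.inr j2)))
        = ∫ θ in a..b, (∫ η in θ..b, B_I η i (Sum.inr (Sum.inr (Sum.inr j2))))
            * Dx x θ (Sum.inr (Sum.inr j2)) := by
    intro j2
    have e : (fun s => B_I s i (Sum.inr (Sum.inr (Sum.inr j2))) *
        ∫ θ in a..s, (Qmat n0 n1 n2 (s - θ)).mulVec (Dx x θ) (Sum.inr (Sum.inr j2)))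
        = fun s => B_I s i (Sum.inr (Sum.inr (Sum.inr j2))) *
            ∫ θ in a..s, Dx x θ (Sum.inr (Sum.inr j2)) := by
      funext s
      congr 1
      refine intervalIntegral.integral_congr fun θ _ => ?_
      rw [Qmat_mulVec]
      simp only [Sum.elim_inl, Sum.elim_inr]
    rw [e]
    exact fubini_sep hab' (hBon i (Sum.inr (Sum.inr (Sum.inr j2)))) (hDon (Sum.inr (Sum.inr j2)))
  have hS2 : ∀ j2 : Fin n2,
      (∫ s in a..b, B_I s i (Sum.inr (Sum.inr (Sum.inl j2))) *
          ∫ θ in a..s, (Qmat n0 n1 n2 (s - θ)).mulVec (Dx x θ) (Sum.inr (Sum.inl j2)))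
        = ∫ θ in a..b, (∫ η in θ..b, (η - θ) * B_I η i (Sum.inr (Sum.inr (Sum.inl j2))))
            * Dx x θ (Sum.inr (Sum.inr j2)) := by
    intro j2
    have hb2II : IntervalIntegrable
        (fun s => B_I s i (Sum.inr (Sum.inr (Sum.inl j2)))) volume a b := hBIint _ _
    have hwII : IntervalIntegrable
        (fun θ => Dx x θ (Sum.inr (Sum.inr j2))) volume a b := hDII _
    have hθwII : IntervalIntegrable
        (fun θ => θ * Dx x θ (Sum.inr (Sum.inr j2))) volume a b :=
      contOn_mul_II hab' continuous_id.continuousOn hwII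
    have hsb2II : IntervalIntegrable
        (fun s => s * B_I s i (Sum.inr (Sum.inr (Sum.inl j2)))) volume a b :=
      contOn_mul_II hab' continuous_id.continuousOn hb2II
    have e : (fun s => B_I s i (Sum.inr (Sum.inr (Sum.inl j2))) *
        ∫ θ in a..s, (Qmat n0 n1 n2 (s - θ)).mulVec (Dx x θ) (Sum.inr (Sum.inl j2)))
        = fun s => B_I s i (Sum.inr (Sum.inr (Sum.inl j2))) *
            ∫ θ in a..s, (s - θ) * Dx x θ (Sum.inr (Sum.inr j2)) := by
      funext s
      congr 1
      refine intervalIntegral.integral_congr fun θ _ => ?_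
      rw [Qmat_mulVec]
      simp only [Sum.elim_inl, Sum.elim_inr]
    rw [e]
    have step1 : (∫ s in a..b, B_I s i (Sum.inr (Sum.inr (Sum.inl j2))) *
          ∫ θ in a..s, (s - θ) * Dx x θ (Sum.inr (Sum.inr j2)))
        = (∫ s in a..b, (s * B_I s i (Sum.inr (Sum.inr (Sum.inl j2)))) *
              ∫ θ in a..s, Dx x θ (Sum.inr (Sum.inr j2)))
          - ∫ s in a..b, B_I s i (Sum.inr (Sum.inr (Sum.inl j2))) *
              ∫ θ in a..s, θ * Dx x θ (Sum.inr (Sum.inr j2)) := by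
      rw [← intervalIntegral.integral_sub
          (hsb2II.mul_continuousOn (by rw [huIcc]; exact hprimR hwII))
          (hb2II.mul_continuousOn (by rw [huIcc]; exact hprimR hθwII))]
      refine intervalIntegral.integral_congr fun s hs => ?_
      rw [huIcc] at hs
      have hinner : ∫ θ in a..s, (s - θ) * Dx x θ (Sum.inr (Sum.inr j2))
          = s * (∫ θ in a..s, Dx x θ (Sum.inr (Sum.inr j2)))
            - ∫ θ in a..s, θ * Dx x θ (Sum.inr (Sum.inr j2)) := by
        have h1 : ∀ θ : ℝ, (s - θ) * Dx x θ (Sum.inr (Sum.inr j2))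
            = s * Dx x θ (Sum.inr (Sum.inr j2)) - θ * Dx x θ (Sum.inr (Sum.inr j2)) :=
          fun θ => by ring
        simp only [h1]
        rw [intervalIntegral.integral_sub ((hmono hwII hs).const_mul s) (hmono hθwII hs),
          intervalIntegral.integral_const_mul]
      rw [hinner]
      ring
    rw [step1,
      fubini_sep hab' ((intervalIntegrable_iff_integrableOn_Ioc_of_le hab').1 hsb2II)
        (hDon (Sum.inr (Sum.inr j2))),
      fubini_sep hab' (hBon i (Sum.inr (Sum.inr (Sum.inl j2))))
        ((intervalIntegrable_iff_integrableOn_Ioc_of_le hab').1 hθwII)]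
    rw [← intervalIntegral.integral_sub
        (contOn_mul_II hab' (hprimL hsb2II) hwII)
        (contOn_mul_II hab' (hprimL hb2II) hθwII)]
    refine intervalIntegral.integral_congr fun θ hθ => ?_
    rw [huIcc] at hθ
    have hK2 : ∫ η in θ..b, (η - θ) * B_I η i (Sum.inr (Sum.inr (Sum.inl j2)))
        = (∫ η in θ..b, η * B_I η i (Sum.inr (Sum.inr (Sum.inl j2))))
          - θ * ∫ η in θ..b, B_I η i (Sum.inr (Sum.inr (Sum.inl j2))) := by
      have h1 : ∀ η : ℝ, (η - θ) * B_I η i (Sum.inr (Sum.inr (Sum.inl j2)))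
          = η * B_I η i (Sum.inr (Sum.inr (Sum.inl j2)))
            - θ * B_I η i (Sum.inr (Sum.inr (Sum.inl j2))) := fun η => by ring
      simp only [h1]
      rw [intervalIntegral.integral_sub (hmono' hsb2II hθ) ((hmono' hb2II hθ).const_mul θ),
        intervalIntegral.integral_const_mul]
    rw [hK2]
    ring
  -- continuity of the kernels of Ψ
  have hK1c : ∀ j1 : Fin n1, ContinuousOn
      (fun θ => ∫ η in θ..b, B_I η i (Sum.inr (Sum.inl j1))) (Set.Icc a b) :=
    fun j1 => hprimL (hBIint _ _)
  have hK3c : ∀ j2 : Fin n2, ContinuousOn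
      (fun θ => ∫ η in θ..b, B_I η i (Sum.inr (Sum.inr (Sum.inr j2)))) (Set.Icc a b) :=
    fun j2 => hprimL (hBIint _ _)
  have hK2c : ∀ j2 : Fin n2, ContinuousOn
      (fun θ => ∫ η in θ..b, (η - θ) * B_I η i (Sum.inr (Sum.inr (Sum.inl j2))))
      (Set.Icc a b) := by
    intro j2
    have hb2II : IntervalIntegrable
        (fun s => B_I s i (Sum.inr (Sum.inr (Sum.inl j2)))) volume a b := hBIint _ _
    have hsb2II : IntervalIntegrable
        (fun s => s * B_I s i (Sum.inr (Sum.inr (Sum.inl j2)))) volume a b :=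
      contOn_mul_II hab' continuous_id.continuousOn hb2II
    refine ContinuousOn.congr ((hprimL hsb2II).sub (continuousOn_id.mul (hprimL hb2II))) ?_
    intro θ hθ
    have h1 : ∀ η : ℝ, (η - θ) * B_I η i (Sum.inr (Sum.inr (Sum.inl j2)))
        = η * B_I η i (Sum.inr (Sum.inr (Sum.inl j2)))
          - θ * B_I η i (Sum.inr (Sum.inr (Sum.inl j2))) := fun η => by ring
    simp only [h1]
    rw [intervalIntegral.integral_sub (hmono' hsb2II hθ) ((hmono' hb2II hθ).const_mul θ),
      intervalIntegral.integral_const_mul]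
    rfl
  have hΨtermII1 : ∀ j1 : Fin n1, IntervalIntegrable (fun θ =>
      (∫ η in θ..b, B_I η i (Sum.inr (Sum.inl j1))) * Dx x θ (Sum.inr (Sum.inl j1)))
      volume a b := fun j1 => contOn_mul_II hab' (hK1c j1) (hDII _)
  have hΨtermII2 : ∀ j2 : Fin n2, IntervalIntegrable (fun θ =>
      (∫ η in θ..b, (η - θ) * B_I η i (Sum.inr (Sum.inr (Sum.inl j2)))) *
        Dx x θ (Sum.inr (Sum.inr j2))) volume a b :=
    fun j2 => contOn_mul_II hab' (hK2c j2) (hDII _)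
  have hΨtermII3 : ∀ j2 : Fin n2, IntervalIntegrable (fun θ =>
      (∫ η in θ..b, B_I η i (Sum.inr (Sum.inr (Sum.inr j2)))) *
        Dx x θ (Sum.inr (Sum.inr j2))) volume a b :=
    fun j2 => contOn_mul_II hab' (hK3c j2) (hDII _)
  have hΨII : IntervalIntegrable (fun θ =>
      (∑ j1 : Fin n1, (∫ η in θ..b, B_I η i (Sum.inr (Sum.inl j1)))
          * Dx x θ (Sum.inr (Sum.inl j1)))
      + ((∑ j2 : Fin n2, (∫ η in θ..b, (η - θ) * B_I η i (Sum.inr (Sum.inr (Sum.inl j2))))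
            * Dx x θ (Sum.inr (Sum.inr j2)))
        + ∑ j2 : Fin n2, (∫ η in θ..b, B_I η i (Sum.inr (Sum.inr (Sum.inr j2))))
            * Dx x θ (Sum.inr (Sum.inr j2)))) volume a b :=
    (II_sum _ hΨtermII1).add ((II_sum _ hΨtermII2).add (II_sum _ hΨtermII3))
  have hswap : (∫ s in a..b, ∑ j : Ic n1 n2,
        B_I s i (Sum.inr j) * ∫ θ in a..s, (Qmat n0 n1 n2 (s - θ)).mulVec (Dx x θ) j)
      = ∫ θ in a..b,
        ((∑ j1 : Fin n1, (∫ η in θ..b, B_I η i (Sum.inr (Sum.inl j1)))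
            * Dx x θ (Sum.inr (Sum.inl j1)))
        + ((∑ j2 : Fin n2, (∫ η in θ..b, (η - θ) * B_I η i (Sum.inr (Sum.inr (Sum.inl j2))))
              * Dx x θ (Sum.inr (Sum.inr j2)))
          + ∑ j2 : Fin n2, (∫ η in θ..b, B_I η i (Sum.inr (Sum.inr (Sum.inr j2))))
              * Dx x θ (Sum.inr (Sum.inr j2)))) := by
    rw [intervalIntegral.integral_finset_sum (fun j _ => hΦterm j),
      Fintype.sum_sum_type, Fintype.sum_sum_type]
    have e1 : ∑ j1 : Fin n1, (∫ s in a..b, B_I s i (Sum.inr (Sum.inl j1)) *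
          ∫ θ in a..s, (Qmat n0 n1 n2 (s - θ)).mulVec (Dx x θ) (Sum.inl j1))
        = ∑ j1 : Fin n1, ∫ θ in a..b,
            (∫ η in θ..b, B_I η i (Sum.inr (Sum.inl j1))) * Dx x θ (Sum.inr (Sum.inl j1)) :=
      Finset.sum_congr rfl fun j1 _ => hS1 j1
    have e2 : ∑ j2 : Fin n2, (∫ s in a..b, B_I s i (Sum.inr (Sum.inr (Sum.inl j2))) *
          ∫ θ in a..s, (Qmat n0 n1 n2 (s - θ)).mulVec (Dx x θ) (Sum.inr (Sum.inl j2)))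
        = ∑ j2 : Fin n2, ∫ θ in a..b,
            (∫ η in θ..b, (η - θ) * B_I η i (Sum.inr (Sum.inr (Sum.inl j2))))
              * Dx x θ (Sum.inr (Sum.inr j2)) :=
      Finset.sum_congr rfl fun j2 _ => hS2 j2
    have e3 : ∑ j2 : Fin n2, (∫ s in a..b, B_I s i (Sum.inr (Sum.inr (Sum.inr j2))) *
          ∫ θ in a..s, (Qmat n0 n1 n2 (s - θ)).mulVec (Dx x θ) (Sum.inr (Sum.inr j2)))
        = ∑ j2 : Fin n2, ∫ θ in a..b,
            (∫ η in θ..b, B_I η i (Sum.inr (Sum.inr (Sum.inr j2))))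
              * Dx x θ (Sum.inr (Sum.inr j2)) :=
      Finset.sum_congr rfl fun j2 _ => hS3 j2
    rw [e1, e2, e3,
      intervalIntegral.integral_add (II_sum _ hΨtermII1)
        ((II_sum _ hΨtermII2).add (II_sum _ hΨtermII3)),
      intervalIntegral.integral_add (II_sum _ hΨtermII2) (II_sum _ hΨtermII3),
      intervalIntegral.integral_finset_sum (fun j1 _ => hΨtermII1 j1),
      intervalIntegral.integral_finset_sum (fun j2 _ => hΨtermII2 j2),
      intervalIntegral.integral_finset_sum (fun j2 _ => hΨtermII3 j2)]
  -- identification of Ψ with the matrix form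
  have hΨeq : ∀ θ ∈ Set.Icc a b,
      (Matrix.of fun i' j => ∫ η in θ..b,
        (B_I η * U2 n0 n1 n2 * Qmat n0 n1 n2 (η - θ)) i' j).mulVec (Dx x θ) i
      = (∑ j1 : Fin n1, (∫ η in θ..b, B_I η i (Sum.inr (Sum.inl j1)))
            * Dx x θ (Sum.inr (Sum.inl j1)))
        + ((∑ j2 : Fin n2, (∫ η in θ..b, (η - θ) * B_I η i (Sum.inr (Sum.inr (Sum.inl j2))))
              * Dx x θ (Sum.inr (Sum.inr j2)))
          + ∑ j2 : Fin n2, (∫ η in θ..b, B_I η i (Sum.inr (Sum.inr (Sum.inr j2))))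
              * Dx x θ (Sum.inr (Sum.inr j2))) := by
    intro θ hθ
    rw [of_mulVec_apply, Fintype.sum_sum_type, Fintype.sum_sum_type]
    have hZ : ∑ j0 : Fin n0, (∫ η in θ..b,
        (B_I η * U2 n0 n1 n2 * Qmat n0 n1 n2 (η - θ)) i (Sum.inl j0)) * Dx x θ (Sum.inl j0)
        = 0 := by
      refine Finset.sum_eq_zero fun j0 _ => ?_
      have h1 : ∀ η : ℝ, (B_I η * U2 n0 n1 n2 * Qmat n0 n1 n2 (η - θ)) i (Sum.inl j0) = 0 :=
        fun η => (BIU2Q_apply (B_I η) (η - θ) i).1 j0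
      simp [h1]
    have hA : ∑ j1 : Fin n1, (∫ η in θ..b,
          (B_I η * U2 n0 n1 n2 * Qmat n0 n1 n2 (η - θ)) i (Sum.inr (Sum.inl j1)))
            * Dx x θ (Sum.inr (Sum.inl j1))
        = ∑ j1 : Fin n1, (∫ η in θ..b, B_I η i (Sum.inr (Sum.inl j1)))
            * Dx x θ (Sum.inr (Sum.inl j1)) := by
      refine Finset.sum_congr rfl fun j1 _ => ?_
      congr 1
      refine intervalIntegral.integral_congr fun η _ => ?_
      exact (BIU2Q_apply (B_I η) (η - θ) i).2.1 j1
    have hB : ∑ j2 : Fin n2, (∫ η in θ..b,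
          (B_I η * U2 n0 n1 n2 * Qmat n0 n1 n2 (η - θ)) i (Sum.inr (Sum.inr j2)))
            * Dx x θ (Sum.inr (Sum.inr j2))
        = (∑ j2 : Fin n2, (∫ η in θ..b, (η - θ) * B_I η i (Sum.inr (Sum.inr (Sum.inl j2))))
              * Dx x θ (Sum.inr (Sum.inr j2)))
          + ∑ j2 : Fin n2, (∫ η in θ..b, B_I η i (Sum.inr (Sum.inr (Sum.inr j2))))
              * Dx x θ (Sum.inr (Sum.inr j2)) := by
      rw [← Finset.sum_add_distrib]
      refine Finset.sum_congr rfl fun j2 _ => ?_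
      have h1 : ∀ η : ℝ, (B_I η * U2 n0 n1 n2 * Qmat n0 n1 n2 (η - θ)) i (Sum.inr (Sum.inr j2))
          = (η - θ) * B_I η i (Sum.inr (Sum.inr (Sum.inl j2)))
            + B_I η i (Sum.inr (Sum.inr (Sum.inr j2))) :=
        fun η => (BIU2Q_apply (B_I η) (η - θ) i).2.2 j2
      have h2 : ∫ η in θ..b, (B_I η * U2 n0 n1 n2 * Qmat n0 n1 n2 (η - θ)) i (Sum.inr (Sum.inr j2))
          = (∫ η in θ..b, (η - θ) * B_I η i (Sum.inr (Sum.inr (Sum.inl j2))))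
            + ∫ η in θ..b, B_I η i (Sum.inr (Sum.inr (Sum.inr j2))) := by
        simp only [h1]
        refine intervalIntegral.integral_add ?_ (hmono' (hBIint _ _) hθ)
        exact hmono' (contOn_mul_II hab'
          ((continuous_id.sub continuous_const).continuousOn) (hBIint _ _)) hθ
      rw [h2]
      ring
    rw [hZ, hA, hB]
    ring
  have hΨofII : IntervalIntegrable (fun s => (Matrix.of fun i' j => ∫ θ in s..b,
      (B_I θ * U2 n0 n1 n2 * Qmat n0 n1 n2 (θ - s)) i' j).mulVec (Dx x s) i) volume a b := by
    rw [intervalIntegrable_iff_integrableOn_Ioc_of_le hab']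
    refine IntegrableOn.congr_fun
      ((intervalIntegrable_iff_integrableOn_Ioc_of_le hab').1 hΨII)
      (fun θ hθ => (hΨeq θ (Set.Ioc_subset_Icc_self hθ)).symm) measurableSet_Ioc
  have hMsplit : (fun s => (B_I s * U1 n0 n1 n2 - B * Qstack n0 n1 n2 (b - s) +
      Matrix.of fun i' j => ∫ θ in s..b,
        (B_I θ * U2 n0 n1 n2 * Qmat n0 n1 n2 (θ - s)) i' j).mulVec (Dx x s) i)
      = fun s => (B_I s * U1 n0 n1 n2).mulVec (Dx x s) i
          - (B * Qstack n0 n1 n2 (b - s)).mulVec (Dx x s) i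
          + (Matrix.of fun i' j => ∫ θ in s..b,
              (B_I θ * U2 n0 n1 n2 * Qmat n0 n1 n2 (θ - s)) i' j).mulVec (Dx x s) i := by
    funext s
    rw [Matrix.add_mulVec, Matrix.sub_mulVec]
    rfl
  constructor
  · rw [hMsplit]
    exact (ht1II.sub hqII).add hΨofII
  · have hbc := hx i
    rw [hLHS, hRHS] at hbc
    rw [hBTv, hMsplit,
      intervalIntegral.integral_add (ht1II.sub hqII) hΨofII,
      intervalIntegral.integral_sub ht1II hqII]
    have h2 : (∫ s in a..b, (Matrix.of fun i' j => ∫ θ in s..b,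
          (B_I θ * U2 n0 n1 n2 * Qmat n0 n1 n2 (θ - s)) i' j).mulVec (Dx x s) i)
        = ∫ θ in a..b,
          ((∑ j1 : Fin n1, (∫ η in θ..b, B_I η i (Sum.inr (Sum.inl j1)))
              * Dx x θ (Sum.inr (Sum.inl j1)))
          + ((∑ j2 : Fin n2, (∫ η in θ..b, (η - θ) * B_I η i (Sum.inr (Sum.inr (Sum.inl j2))))
                * Dx x θ (Sum.inr (Sum.inr j2)))
            + ∑ j2 : Fin n2, (∫ η in θ..b, B_I η i (Sum.inr (Sum.inr (Sum.inr j2))))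
                * Dx x θ (Sum.inr (Sum.inr j2)))) := by
      refine intervalIntegral.integral_congr fun θ hθ => ?_
      rw [huIcc] at hθ
      exact hΨeq θ hθ
    rw [h2, ← hswap]
    linarith [hbc]

end Master

/-- If `{(n0,n1,n2), B, B_I}` is admissible, then for every `x ∈ X`
the boundary core is recovered from the fundamental state:
`x_c(a) = ∫_a^b B_Q(s) (Dx)(s) ds`. -/
theorem boundary_core_recovery (a b : ℝ) (hab : a < b) (n0 n1 n2 : ℕ)
    (B : Matrix (Ic n1 n2) (Ic n1 n2 ⊕ Ic n1 n2) ℝ)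
    (B_I : ℝ → Matrix (Ic n1 n2) (ID n0 n1 n2) ℝ)
    (hBI : SqIntMat a b B_I)
    (hadm : Admissible a b n0 n1 n2 B B_I)
    (x : State a b n0 n1 n2) (hx : BCholds a b n0 n1 n2 B B_I x) :
    ∀ i, xc x a i = ∫ s in a..b, (BQ a b n0 n1 n2 B B_I s).mulVec (Dx x s) i := by
  intro i
  have hinv : (BT a b n0 n1 n2 B B_I)⁻¹ * BT a b n0 n1 n2 B B_I = 1 :=
    Matrix.nonsing_inv_mul _ hadm
  have hkey := fun k => master a b hab n0 n1 n2 B B_I hBI x hx k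
  have h1 : xc x a i
      = ((BT a b n0 n1 n2 B B_I)⁻¹ * BT a b n0 n1 n2 B B_I).mulVec (xc x a) i := by
    rw [hinv, Matrix.one_mulVec]
  rw [h1, ← Matrix.mulVec_mulVec]
  have h2 : (BT a b n0 n1 n2 B B_I)⁻¹.mulVec ((BT a b n0 n1 n2 B B_I).mulVec (xc x a)) i
      = ∑ k, (BT a b n0 n1 n2 B B_I)⁻¹ i k * (BT a b n0 n1 n2 B B_I).mulVec (xc x a) k := rfl
  rw [h2]
  have h3 : ∀ k, (BT a b n0 n1 n2 B B_I).mulVec (xc x a) k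
      = ∫ s in a..b, (B_I s * U1 n0 n1 n2 - B * Qstack n0 n1 n2 (b - s) +
          Matrix.of fun i' j => ∫ θ in s..b,
            (B_I θ * U2 n0 n1 n2 * Qmat n0 n1 n2 (θ - s)) i' j).mulVec (Dx x s) k :=
    fun k => (hkey k).2
  simp only [h3]
  rw [sum_mul_integral _ _ (fun k => (hkey k).1)]
  refine intervalIntegral.integral_congr fun s _ => ?_
  simp only [BQ]
  rw [← Matrix.mulVec_mulVec]
  rfl

end PIEpaper
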